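/- Let c > 0, A ∈ ℝ, let f : ℝ → ℝ be continuous, and let u = (u₁,u₂) : ℝ² → ℝ² be a C¹ vector field with ∂₁u₁ + ∂₂u₂ ≡ 0, with u(x₁+1, x₂) = u(x₁, x₂+1) = u(x₁,x₂) for all x, and with ∫₀¹ u₁(0, x₂) dx₂ = 0. Let T : ℝ × ℝ² → ℝ be twice continuously differentiable and satisfy: (a) ∂_t T + A·u(x)·∇_x T = Δ_x T + f(T) at every point; (b) T(t, x₁, x₂+1) = T(t, x₁, x₂) and T(t + 1/c, x₁+1, x₂) = T(t, x₁, x₂) for all (t, x₁, x₂); (c) T(t, x₁, x₂) → 1 as x₁ → −∞ and T(t, x₁, x₂) → 0 as x₁ → +∞, uniformly in x₂ ∈ [0,1] and t ∈ [0, 1/c]; (d) the functions (t,x) ↦ ∂_t T, f(T(t,x)), u(x)·∇_x T, and Δ_x T are Lebesgue integrable over [0,1/c] × (ℝ × (0,1)); (e) x ↦ T(0, x₁, x₂) − χ_{\{x₁ < 0\}} is integrable over ℝ × (0,1); (f) for every t ∈ [0, 1/c], ∫₀¹ ∂T/∂x₁(t, R, x₂) dx₂ → 0 as R → ±∞. Then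 ∫₀^{1/c} ∫_{ℝ×(0,1)} f(T(t,x)) dx dt = 1. -/

import Mathlib

open MeasureTheory Set Filter

/-- Time derivative `∂_t T` of a function `T = T(t, x₁, x₂)`. -/
noncomputable def pdt (T : ℝ → ℝ → ℝ → ℝ) (t x₁ x₂ : ℝ) : ℝ :=
  deriv (fun s => T s x₁ x₂) t

/-- First spatial partial derivative `∂_{x₁} T`. -/
noncomputable def pd1 (T : ℝ → ℝ → ℝ → ℝ) (t x₁ x₂ : ℝ) : ℝ :=
  deriv (fun a => T t a x₂) x₁

/-- Second spatial partial derivative `∂_{x₂} T`. -/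
noncomputable def pd2 (T : ℝ → ℝ → ℝ → ℝ) (t x₁ x₂ : ℝ) : ℝ :=
  deriv (fun b => T t x₁ b) x₂

/-- Spatial Laplacian `Δ_x T = ∂²_{x₁} T + ∂²_{x₂} T`. -/
noncomputable def plap (T : ℝ → ℝ → ℝ → ℝ) (t x₁ x₂ : ℝ) : ℝ :=
  deriv (fun a => deriv (fun a' => T t a' x₂) a) x₁ +
    deriv (fun b => deriv (fun b' => T t x₁ b') b) x₂

/-! ### Auxiliary lemmas -/

section Aux
open Metric

lemma hasDerivAt_line1 {Φ : ℝ × ℝ × ℝ → ℝ} (hΦ : Differentiable ℝ Φ) (t x y : ℝ) :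
    HasDerivAt (fun s => Φ (s, x, y)) (fderiv ℝ Φ (t, x, y) (1, 0, 0)) t :=
  (hΦ.differentiableAt.hasFDerivAt.comp_hasDerivAt t
    ((hasDerivAt_id t).prodMk ((hasDerivAt_const t x).prodMk (hasDerivAt_const t y))))

lemma hasDerivAt_line2 {Φ : ℝ × ℝ × ℝ → ℝ} (hΦ : Differentiable ℝ Φ) (t x y : ℝ) :
    HasDerivAt (fun a => Φ (t, a, y)) (fderiv ℝ Φ (t, x, y) (0, 1, 0)) x :=
  (hΦ.differentiableAt.hasFDerivAt.comp_hasDerivAt x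
    ((hasDerivAt_const x t).prodMk ((hasDerivAt_id x).prodMk (hasDerivAt_const x y))))

lemma hasDerivAt_line3 {Φ : ℝ × ℝ × ℝ → ℝ} (hΦ : Differentiable ℝ Φ) (t x y : ℝ) :
    HasDerivAt (fun b => Φ (t, x, b)) (fderiv ℝ Φ (t, x, y) (0, 0, 1)) y :=
  (hΦ.differentiableAt.hasFDerivAt.comp_hasDerivAt y
    ((hasDerivAt_const y t).prodMk ((hasDerivAt_const y x).prodMk (hasDerivAt_id y))))

lemma continuous_fderiv_apply {E : Type*} [NormedAddCommGroup E] [NormedSpace ℝ E]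
    {F : Type*} [NormedAddCommGroup F] [NormedSpace ℝ F]
    {Φ : E → F} (hΦ : ContDiff ℝ 1 Φ) (v : E) :
    Continuous fun p => fderiv ℝ Φ p v :=
  ((hΦ.fderiv_right (m := 0) le_rfl).clm_apply contDiff_const).continuous

lemma contDiff_fderiv_apply {E : Type*} [NormedAddCommGroup E] [NormedSpace ℝ E]
    {F : Type*} [NormedAddCommGroup F] [NormedSpace ℝ F]
    {Φ : E → F} (hΦ : ContDiff ℝ 2 Φ) (v : E) :
    ContDiff ℝ 1 fun p => fderiv ℝ Φ p v :=
  ((hΦ.fderiv_right (m := 1) (by norm_num)).clm_apply contDiff_const)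

lemma integral_Ioo_deriv (g g' : ℝ → ℝ) (hd : ∀ y, HasDerivAt g (g' y) y)
    (hc : Continuous g') : ∫ y in Ioo (0:ℝ) 1, g' y = g 1 - g 0 := by
  rw [← integral_Ioc_eq_integral_Ioo, ← intervalIntegral.integral_of_le (by norm_num : (0:ℝ) ≤ 1)]
  exact intervalIntegral.integral_eq_sub_of_hasDerivAt (fun y _ => hd y)
    (hc.intervalIntegrable 0 1)

lemma integrableOn_Ioo_of_continuous {g : ℝ → ℝ} (hg : Continuous g) :
    IntegrableOn g (Ioo (0:ℝ) 1) volume :=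
  (hg.integrableOn_Icc).mono_set Ioo_subset_Icc_self

/-- Differentiation under the integral sign over `Ioo 0 1`. -/
lemma hasDerivAt_int (F F' : ℝ → ℝ → ℝ)
    (hF : Continuous fun p : ℝ × ℝ => F p.1 p.2)
    (hF' : Continuous fun p : ℝ × ℝ => F' p.1 p.2)
    (hd : ∀ x y, HasDerivAt (fun a => F a y) (F' x y) x) (x₀ : ℝ) :
    HasDerivAt (fun a => ∫ y in Ioo (0:ℝ) 1, F a y) (∫ y in Ioo (0:ℝ) 1, F' x₀ y) x₀ := by
  obtain ⟨C, hC⟩ : ∃ C, ∀ p ∈ Icc (x₀ - 1) (x₀ + 1) ×ˢ Icc (0:ℝ) 1,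
      ‖(fun p : ℝ × ℝ => F' p.1 p.2) p‖ ≤ C :=
    (isCompact_Icc.prod isCompact_Icc).exists_bound_of_continuousOn hF'.continuousOn
  have hcont : ∀ x : ℝ, Continuous fun y => F x y := fun x =>
    hF.comp (continuous_const.prodMk continuous_id)
  have hcont' : ∀ x : ℝ, Continuous fun y => F' x y := fun x =>
    hF'.comp (continuous_const.prodMk continuous_id)
  refine (hasDerivAt_integral_of_dominated_loc_of_deriv_le (s := Metric.ball x₀ 1) (Metric.ball_mem_nhds x₀ one_pos)
    (Eventually.of_forall fun x => ((hcont x).aestronglyMeasurable).restrict)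
    (integrableOn_Ioo_of_continuous (hcont x₀))
    ((hcont' x₀).aestronglyMeasurable.restrict)
    (bound := fun _ => C) ?_ ?_
    (Eventually.of_forall fun y => fun x _ => hd x y)).2
  · refine (ae_restrict_iff' measurableSet_Ioo).2 (Eventually.of_forall fun y hy x hx => ?_)
    exact hC (x, y) ⟨⟨by linarith [abs_le.1 (le_of_lt (by
      simpa [Real.norm_eq_abs] using mem_ball_iff_norm.1 hx))],
      by linarith [abs_le.1 (le_of_lt (by simpa [Real.norm_eq_abs] using mem_ball_iff_norm.1 hx))]⟩,
      ⟨hy.1.le, hy.2.le⟩⟩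
  · exact integrableOn_const (by simp [Real.volume_Ioo])

/-- The shift `(x₁, x₂) ↦ (x₁ - 1, x₂)` as a measurable equivalence. -/
noncomputable def eshift : ℝ × ℝ ≃ᵐ ℝ × ℝ :=
  (Homeomorph.prodCongr (Homeomorph.subRight (1:ℝ)) (Homeomorph.refl ℝ)).toMeasurableEquiv

lemma eshift_apply (x : ℝ × ℝ) : eshift x = (x.1 - 1, x.2) := rfl

lemma eshift_mp : MeasurePreserving eshift volume volume := by
  rw [Measure.volume_eq_prod]
  exact (measurePreserving_sub_right volume 1).prod (MeasurePreserving.id volume)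

lemma eshift_pre : eshift ⁻¹' ((univ : Set ℝ) ×ˢ Ioo (0:ℝ) 1) = (univ : Set ℝ) ×ˢ Ioo (0:ℝ) 1 := by
  ext x; simp [eshift_apply, Set.mem_prod]

lemma eshift_mp_restrict : MeasurePreserving eshift
    (volume.restrict ((univ : Set ℝ) ×ˢ Ioo (0:ℝ) 1))
    (volume.restrict ((univ : Set ℝ) ×ˢ Ioo (0:ℝ) 1)) := by
  have := eshift_mp.restrict_preimage
    (s := (univ : Set ℝ) ×ˢ Ioo (0:ℝ) 1) (MeasurableSet.univ.prod measurableSet_Ioo)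
  rwa [eshift_pre] at this

lemma shift_integrable (G : ℝ × ℝ → ℝ)
    (hG : IntegrableOn G ((univ : Set ℝ) ×ˢ Ioo (0:ℝ) 1) volume) :
    IntegrableOn (fun x : ℝ × ℝ => G (x.1 - 1, x.2)) ((univ : Set ℝ) ×ˢ Ioo (0:ℝ) 1) volume :=
  (eshift_mp_restrict.integrable_comp_emb eshift.measurableEmbedding).2 hG

lemma shift_integral_eq (G : ℝ × ℝ → ℝ) :
    ∫ x in (univ : Set ℝ) ×ˢ Ioo (0:ℝ) 1, G (x.1 - 1, x.2) =
    ∫ x in (univ : Set ℝ) ×ˢ Ioo (0:ℝ) 1, G x :=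
  eshift_mp_restrict.integral_comp eshift.measurableEmbedding G

lemma u_bound {u : ℝ × ℝ → ℝ × ℝ} (huc : Continuous u)
    (huper1 : ∀ x₁ x₂ : ℝ, u (x₁ + 1, x₂) = u (x₁, x₂))
    (huper2 : ∀ x₁ x₂ : ℝ, u (x₁, x₂ + 1) = u (x₁, x₂)) :
    ∃ C : ℝ, 0 ≤ C ∧ ∀ p : ℝ × ℝ, |(u p).1| ≤ C := by
  obtain ⟨C, hC⟩ := ((isCompact_Icc (a := (0:ℝ)) (b := (1:ℝ))).prod
    (isCompact_Icc (a := (0:ℝ)) (b := (1:ℝ)))).exists_bound_of_continuousOn huc.continuousOn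
  refine ⟨max C 0, le_max_right _ _, fun p => ?_⟩
  have hper1 : Function.Periodic (fun a => u (a, p.2)) 1 := fun a => huper1 a p.2
  have hper2 : Function.Periodic (fun b => u (Int.fract p.1, b)) 1 := fun b =>
    huper2 (Int.fract p.1) b
  have h1 : u (Int.fract p.1, p.2) = u p := by
    have h := hper1.sub_int_mul_eq (x := p.1) ⌊p.1⌋
    rw [mul_one, Int.self_sub_floor] at h
    exact h
  have h2 : u (Int.fract p.1, Int.fract p.2) = u (Int.fract p.1, p.2) := by
    have h := hper2.sub_int_mul_eq (x := p.2) ⌊p.2⌋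
    rw [mul_one, Int.self_sub_floor] at h
    exact h
  have hmem : (Int.fract p.1, Int.fract p.2) ∈ Icc (0:ℝ) 1 ×ˢ Icc (0:ℝ) 1 :=
    ⟨⟨Int.fract_nonneg _, (Int.fract_lt_one _).le⟩, ⟨Int.fract_nonneg _, (Int.fract_lt_one _).le⟩⟩
  have hb : ‖u p‖ ≤ C := by rw [← h1, ← h2]; exact hC _ hmem
  have habs : |(u p).1| ≤ ‖u p‖ := by rw [← Real.norm_eq_abs]; exact norm_fst_le (u p)
  exact le_max_of_le_left (habs.trans hb)

end Aux

section TLayer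
variable {T : ℝ → ℝ → ℝ → ℝ}

noncomputable def PhiT (T : ℝ → ℝ → ℝ → ℝ) : ℝ × ℝ × ℝ → ℝ := fun p => T p.1 p.2.1 p.2.2
noncomputable def DtT (T : ℝ → ℝ → ℝ → ℝ) : ℝ × ℝ × ℝ → ℝ := fun p => fderiv ℝ (PhiT T) p (1,0,0)
noncomputable def D1T (T : ℝ → ℝ → ℝ → ℝ) : ℝ × ℝ × ℝ → ℝ := fun p => fderiv ℝ (PhiT T) p (0,1,0)
noncomputable def D2T (T : ℝ → ℝ → ℝ → ℝ) : ℝ × ℝ × ℝ → ℝ := fun p => fderiv ℝ (PhiT T) p (0,0,1)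
noncomputable def D11T (T : ℝ → ℝ → ℝ → ℝ) : ℝ × ℝ × ℝ → ℝ := fun p => fderiv ℝ (D1T T) p (0,1,0)
noncomputable def D22T (T : ℝ → ℝ → ℝ → ℝ) : ℝ × ℝ × ℝ → ℝ := fun p => fderiv ℝ (D2T T) p (0,0,1)

variable (hT : ContDiff ℝ 2 (PhiT T))
include hT

lemma diffPhi : Differentiable ℝ (PhiT T) := hT.differentiable two_ne_zero

lemma hasDerivAt_T1 (t x y : ℝ) : HasDerivAt (fun s => T s x y) (DtT T (t,x,y)) t :=
  hasDerivAt_line1 (diffPhi hT) t x y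
lemma hasDerivAt_T2 (t x y : ℝ) : HasDerivAt (fun a => T t a y) (D1T T (t,x,y)) x :=
  hasDerivAt_line2 (diffPhi hT) t x y
lemma hasDerivAt_T3 (t x y : ℝ) : HasDerivAt (fun b => T t x b) (D2T T (t,x,y)) y :=
  hasDerivAt_line3 (diffPhi hT) t x y

lemma pdt_eq (t x y : ℝ) : pdt T t x y = DtT T (t,x,y) := (hasDerivAt_T1 hT t x y).deriv
lemma pd1_eq (t x y : ℝ) : pd1 T t x y = D1T T (t,x,y) := (hasDerivAt_T2 hT t x y).deriv
lemma pd2_eq (t x y : ℝ) : pd2 T t x y = D2T T (t,x,y) := (hasDerivAt_T3 hT t x y).deriv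

lemma contDiff_D1T : ContDiff ℝ 1 (D1T T) := contDiff_fderiv_apply hT _
lemma contDiff_D2T : ContDiff ℝ 1 (D2T T) := contDiff_fderiv_apply hT _
lemma cont_DtT : Continuous (DtT T) := continuous_fderiv_apply (hT.of_le one_le_two) _
lemma cont_D1T : Continuous (D1T T) := (contDiff_D1T hT).continuous
lemma cont_D2T : Continuous (D2T T) := (contDiff_D2T hT).continuous
lemma cont_D11T : Continuous (D11T T) := continuous_fderiv_apply (contDiff_D1T hT) _
lemma cont_D22T : Continuous (D22T T) := continuous_fderiv_apply (contDiff_D2T hT) _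
lemma cont_PhiT : Continuous (PhiT T) := hT.continuous

lemma hasDerivAt_pd1 (t x y : ℝ) :
    HasDerivAt (fun a => pd1 T t a y) (D11T T (t,x,y)) x := by
  have h : HasDerivAt (fun a => D1T T (t,a,y)) (D11T T (t,x,y)) x := hasDerivAt_line2 ((contDiff_D1T hT).differentiable one_ne_zero) t x y
  simpa only [show (fun a => D1T T (t,a,y)) = fun a => pd1 T t a y from
    funext fun a => (pd1_eq hT t a y).symm] using h

lemma hasDerivAt_pd2 (t x y : ℝ) :
    HasDerivAt (fun b => pd2 T t x b) (D22T T (t,x,y)) y := by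
  have h : HasDerivAt (fun b => D2T T (t,x,b)) (D22T T (t,x,y)) y := hasDerivAt_line3 ((contDiff_D2T hT).differentiable one_ne_zero) t x y
  simpa only [show (fun b => D2T T (t,x,b)) = fun b => pd2 T t x b from
    funext fun b => (pd2_eq hT t x b).symm] using h

lemma plap_eq (t x y : ℝ) : plap T t x y = D11T T (t,x,y) + D22T T (t,x,y) := by
  have h1 : deriv (fun a => deriv (fun a' => T t a' y) a) x = D11T T (t,x,y) :=
    ((hasDerivAt_pd1 hT t x y).congr_of_eventuallyEq (Eventually.of_forall fun a => rfl)).deriv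
  have h2 : deriv (fun b => deriv (fun b' => T t x b') b) y = D22T T (t,x,y) :=
    ((hasDerivAt_pd2 hT t x y).congr_of_eventuallyEq (Eventually.of_forall fun b => rfl)).deriv
  simp [plap, h1, h2]

omit hT in
/-- `x₂`-periodicity of `pd2`. -/
lemma pd2_period (hTper2 : ∀ t x₁ x₂ : ℝ, T t x₁ (x₂ + 1) = T t x₁ x₂) (t x : ℝ) :
    pd2 T t x 1 = pd2 T t x 0 := by
  have hgp : (fun b => T t x (b + 1)) = fun b => T t x b := funext fun b => hTper2 t x b
  have h1 : deriv (fun b => T t x b) (0 + 1) = deriv (fun b => T t x (b + 1)) 0 :=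
    (deriv_comp_add_const (fun b => T t x b) 1 0).symm
  calc pd2 T t x 1 = deriv (fun b => T t x b) (0 + 1) := by rw [zero_add]; rfl
    _ = deriv (fun b => T t x (b + 1)) 0 := h1
    _ = pd2 T t x 0 := by rw [hgp]; rfl

end TLayer

section ULayer
variable {u : ℝ × ℝ → ℝ × ℝ}

noncomputable def V1u (u : ℝ × ℝ → ℝ × ℝ) : ℝ × ℝ → ℝ :=
  fun p => fderiv ℝ (fun q => (u q).1) p (1,0)
noncomputable def V2u (u : ℝ × ℝ → ℝ × ℝ) : ℝ × ℝ → ℝ :=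
  fun p => fderiv ℝ (fun q => (u q).2) p (0,1)

variable (hu : ContDiff ℝ 1 u)
include hu

lemma contDiff_u1 : ContDiff ℝ 1 (fun q => (u q).1) := (contDiff_fst.of_le le_top).comp hu
lemma contDiff_u2 : ContDiff ℝ 1 (fun q => (u q).2) := (contDiff_snd.of_le le_top).comp hu

lemma hasDerivAt_u1 (x y : ℝ) : HasDerivAt (fun a => (u (a,y)).1) (V1u u (x,y)) x :=
  ((contDiff_u1 hu).differentiable one_ne_zero).differentiableAt.hasFDerivAt.comp_hasDerivAt x
    ((hasDerivAt_id x).prodMk (hasDerivAt_const x y))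

lemma hasDerivAt_u2 (x y : ℝ) : HasDerivAt (fun b => (u (x,b)).2) (V2u u (x,y)) y :=
  ((contDiff_u2 hu).differentiable one_ne_zero).differentiableAt.hasFDerivAt.comp_hasDerivAt y
    ((hasDerivAt_const y x).prodMk (hasDerivAt_id y))

lemma cont_V1u : Continuous (V1u u) :=
  (((contDiff_u1 hu).fderiv_right (m := 0) le_rfl).clm_apply contDiff_const).continuous
lemma cont_V2u : Continuous (V2u u) :=
  (((contDiff_u2 hu).fderiv_right (m := 0) le_rfl).clm_apply contDiff_const).continuous

lemma div_eq (hdiv : ∀ x₁ x₂ : ℝ,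
      deriv (fun a => (u (a, x₂)).1) x₁ + deriv (fun b => (u (x₁, b)).2) x₂ = 0)
    (x y : ℝ) : V1u u (x,y) + V2u u (x,y) = 0 := by
  have h := hdiv x y
  rwa [(hasDerivAt_u1 hu x y).deriv, (hasDerivAt_u2 hu x y).deriv] at h

end ULayer

/-- First integral identity in the proof of Lemma 4.1: for a pulsating front `T` with
speed `c` of `T_t + A·u·∇T = ΔT + f(T)` on the strip (with `u` incompressible, periodic,
of mean-zero horizontal flux), integrating the equation over `[0, 1/c] × (ℝ × (0,1))`
gives `∫∫ f(T) = 1`. -/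
theorem stmt11 (c A : ℝ) (hc : 0 < c) (f : ℝ → ℝ) (hf : Continuous f)
    (u : ℝ × ℝ → ℝ × ℝ) (hu : ContDiff ℝ 1 u)
    (hdiv : ∀ x₁ x₂ : ℝ,
      deriv (fun a => (u (a, x₂)).1) x₁ + deriv (fun b => (u (x₁, b)).2) x₂ = 0)
    (huper1 : ∀ x₁ x₂ : ℝ, u (x₁ + 1, x₂) = u (x₁, x₂))
    (huper2 : ∀ x₁ x₂ : ℝ, u (x₁, x₂ + 1) = u (x₁, x₂))
    (hflux : ∫ x₂ in Ioo (0 : ℝ) 1, (u (0, x₂)).1 = 0)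
    (T : ℝ → ℝ → ℝ → ℝ) (hT : ContDiff ℝ 2 (fun p : ℝ × ℝ × ℝ => T p.1 p.2.1 p.2.2))
    (hpde : ∀ t x₁ x₂ : ℝ, pdt T t x₁ x₂ +
      A * ((u (x₁, x₂)).1 * pd1 T t x₁ x₂ + (u (x₁, x₂)).2 * pd2 T t x₁ x₂) =
      plap T t x₁ x₂ + f (T t x₁ x₂))
    (hTper2 : ∀ t x₁ x₂ : ℝ, T t x₁ (x₂ + 1) = T t x₁ x₂)
    (hTper1 : ∀ t x₁ x₂ : ℝ, T (t + 1 / c) (x₁ + 1) x₂ = T t x₁ x₂)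
    (hlim1 : ∀ ε > 0, ∃ M : ℝ, ∀ x₁ ≤ -M, ∀ x₂ ∈ Icc (0 : ℝ) 1, ∀ t ∈ Icc (0 : ℝ) (1 / c),
      |T t x₁ x₂ - 1| < ε)
    (hlim0 : ∀ ε > 0, ∃ M : ℝ, ∀ x₁ ≥ M, ∀ x₂ ∈ Icc (0 : ℝ) 1, ∀ t ∈ Icc (0 : ℝ) (1 / c),
      |T t x₁ x₂| < ε)
    (hint1 : IntegrableOn (fun p : ℝ × ℝ × ℝ => pdt T p.1 p.2.1 p.2.2)
      (Icc (0 : ℝ) (1 / c) ×ˢ (univ : Set ℝ) ×ˢ Ioo (0 : ℝ) 1) volume)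
    (hint2 : IntegrableOn (fun p : ℝ × ℝ × ℝ => f (T p.1 p.2.1 p.2.2))
      (Icc (0 : ℝ) (1 / c) ×ˢ (univ : Set ℝ) ×ˢ Ioo (0 : ℝ) 1) volume)
    (hint3 : IntegrableOn (fun p : ℝ × ℝ × ℝ =>
        (u (p.2.1, p.2.2)).1 * pd1 T p.1 p.2.1 p.2.2 + (u (p.2.1, p.2.2)).2 * pd2 T p.1 p.2.1 p.2.2)
      (Icc (0 : ℝ) (1 / c) ×ˢ (univ : Set ℝ) ×ˢ Ioo (0 : ℝ) 1) volume)
    (hint4 : IntegrableOn (fun p : ℝ × ℝ × ℝ => plap T p.1 p.2.1 p.2.2)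
      (Icc (0 : ℝ) (1 / c) ×ˢ (univ : Set ℝ) ×ˢ Ioo (0 : ℝ) 1) volume)
    (hint0 : IntegrableOn (fun x : ℝ × ℝ => T 0 x.1 x.2 - if x.1 < 0 then 1 else 0)
      ((univ : Set ℝ) ×ˢ Ioo (0 : ℝ) 1) volume)
    (hbdry : ∀ t ∈ Icc (0 : ℝ) (1 / c),
      Tendsto (fun R => ∫ x₂ in Ioo (0 : ℝ) 1, pd1 T t R x₂) atTop (nhds 0) ∧
      Tendsto (fun R => ∫ x₂ in Ioo (0 : ℝ) 1, pd1 T t R x₂) atBot (nhds 0)) :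
    ∫ p in Icc (0 : ℝ) (1 / c) ×ˢ (univ : Set ℝ) ×ˢ Ioo (0 : ℝ) 1,
      f (T p.1 p.2.1 p.2.2) = 1 := by
  have hTT : ContDiff ℝ 2 (PhiT T) := hT
  set S : Set (ℝ × ℝ) := (univ : Set ℝ) ×ˢ Ioo (0:ℝ) 1 with hS
  set ν1 : Measure ℝ := volume.restrict (Icc (0:ℝ) (1/c)) with hν1
  set ν2 : Measure (ℝ × ℝ) := (volume : Measure ℝ).prod (volume.restrict (Ioo (0:ℝ) 1)) with hν2
  have h2 : (volume : Measure (ℝ × ℝ)).restrict S = ν2 := by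
    rw [hS, hν2, Measure.volume_eq_prod, ← Measure.prod_restrict, Measure.restrict_univ]
  have h3 : (volume : Measure (ℝ × ℝ × ℝ)).restrict (Icc (0:ℝ) (1/c) ×ˢ S) = ν1.prod ν2 := by
    rw [← h2, hν1, Measure.volume_eq_prod, ← Measure.prod_restrict]
  have hInt1 : Integrable (fun p : ℝ × ℝ × ℝ => pdt T p.1 p.2.1 p.2.2) (ν1.prod ν2) := by
    rw [← h3]; exact hint1
  have hInt3 : Integrable (fun p : ℝ × ℝ × ℝ =>
      (u (p.2.1, p.2.2)).1 * pd1 T p.1 p.2.1 p.2.2 +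
        (u (p.2.1, p.2.2)).2 * pd2 T p.1 p.2.1 p.2.2) (ν1.prod ν2) := by
    rw [← h3]; exact hint3
  have hInt4 : Integrable (fun p : ℝ × ℝ × ℝ => plap T p.1 p.2.1 p.2.2) (ν1.prod ν2) := by
    rw [← h3]; exact hint4
  -- the three integral identities
  have hP : ∫ p, pdt T p.1 p.2.1 p.2.2 ∂(ν1.prod ν2) = 1 := by
    rw [integral_prod_symm _ hInt1]
    have hc' : (0:ℝ) ≤ 1/c := by positivity
    have hin : ∀ x : ℝ × ℝ, (∫ t, pdt T t x.1 x.2 ∂ν1) = T 0 (x.1 - 1) x.2 - T 0 x.1 x.2 := by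
      intro x
      have e1 : (∫ t, pdt T t x.1 x.2 ∂ν1) = ∫ t in (0:ℝ)..(1/c), pdt T t x.1 x.2 := by
        rw [hν1]
        rw [show (∫ t in Icc (0:ℝ) (1/c), pdt T t x.1 x.2) =
          ∫ t in Ioc (0:ℝ) (1/c), pdt T t x.1 x.2 from integral_Icc_eq_integral_Ioc,
          ← intervalIntegral.integral_of_le hc']
      rw [e1]
      have heq : (fun t => pdt T t x.1 x.2) = fun t => DtT T (t, x.1, x.2) :=
        funext fun t => pdt_eq hTT t _ _
      rw [heq]
      have hftc : ∫ t in (0:ℝ)..(1/c), DtT T (t, x.1, x.2) = T (1/c) x.1 x.2 - T 0 x.1 x.2 :=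
        intervalIntegral.integral_eq_sub_of_hasDerivAt
          (fun t _ => hasDerivAt_T1 hTT t x.1 x.2)
          (((cont_DtT hTT).comp (continuous_id.prodMk
            (continuous_const.prodMk continuous_const))).intervalIntegrable 0 (1/c))
      rw [hftc]
      have hp := hTper1 0 (x.1 - 1) x.2
      rw [zero_add, sub_add_cancel] at hp
      rw [hp]
    have step1 : ∫ (x : ℝ × ℝ), (∫ t, pdt T t x.1 x.2 ∂ν1) ∂ν2 =
        ∫ x, (T 0 (x.1 - 1) x.2 - T 0 x.1 x.2) ∂ν2 :=
      integral_congr_ae (Eventually.of_forall hin)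
    refine Eq.trans (by exact step1) ?_
    rw [← h2]
    set G : ℝ × ℝ → ℝ := fun x => T 0 x.1 x.2 - if x.1 < 0 then 1 else 0 with hG
    have hdecomp : (fun x : ℝ × ℝ => T 0 (x.1 - 1) x.2 - T 0 x.1 x.2) = fun x =>
        (G (x.1 - 1, x.2) - G x) +
          (Ico (0:ℝ) 1 ×ˢ (univ : Set ℝ)).indicator (fun _ => (1:ℝ)) x := by
      funext x
      simp only [hG, Set.indicator_apply, Set.mem_prod, Set.mem_Ico, Set.mem_univ, and_true]
      by_cases h1 : x.1 < 0
      · have ha : x.1 - 1 < 0 := by linarith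
        have hb : ¬ (0 ≤ x.1 ∧ x.1 < 1) := fun h => absurd h.1 (not_le.2 h1)
        simp only [if_pos h1, if_pos ha, if_neg hb]
        ring
      · by_cases hb : x.1 < 1
        · have ha : x.1 - 1 < 0 := by linarith
          have hm : (0 ≤ x.1 ∧ x.1 < 1) := ⟨not_lt.1 h1, hb⟩
          simp only [if_neg h1, if_pos ha, if_pos hm]
          ring
        · have ha : ¬ (x.1 - 1 < 0) := by intro h; exact hb (by linarith)
          have hm : ¬ (0 ≤ x.1 ∧ x.1 < 1) := fun h => hb h.2
          simp only [if_neg h1, if_neg ha, if_neg hm]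
          ring
    rw [hdecomp]
    have hGs : IntegrableOn (fun x : ℝ × ℝ => G (x.1 - 1, x.2)) S volume := by
      rw [hS]; exact shift_integrable G (by rw [← hS]; exact hint0)
    have hsub : IntegrableOn (fun x : ℝ × ℝ => G (x.1 - 1, x.2) - G x) S volume :=
      hGs.sub hint0
    have hind : IntegrableOn
        ((Ico (0:ℝ) 1 ×ˢ (univ : Set ℝ)).indicator (fun _ => (1:ℝ))) S volume := by
      rw [IntegrableOn, integrable_indicator_iff (measurableSet_Ico.prod MeasurableSet.univ)]
      refine integrableOn_const ?_
      rw [Measure.restrict_apply (measurableSet_Ico.prod MeasurableSet.univ)]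
      have hSe : (Ico (0:ℝ) 1 ×ˢ (univ : Set ℝ)) ∩ S = Ico (0:ℝ) 1 ×ˢ Ioo (0:ℝ) 1 := by
        rw [hS, prod_inter_prod, univ_inter, inter_univ]
      rw [hSe, Measure.volume_eq_prod, Measure.prod_prod, Real.volume_Ico, Real.volume_Ioo]
      norm_num
    rw [integral_add hsub hind]
    have hzero : ∫ x in S, (G (x.1 - 1, x.2) - G x) = 0 := by
      rw [integral_sub hGs hint0, hS, shift_integral_eq G]
      ring
    have hone : ∫ x in S,
        ((Ico (0:ℝ) 1 ×ˢ (univ : Set ℝ)).indicator (fun _ => (1:ℝ))) x = 1 := by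
      rw [setIntegral_indicator (measurableSet_Ico.prod MeasurableSet.univ)]
      have hSe : S ∩ (Ico (0:ℝ) 1 ×ˢ (univ : Set ℝ)) = Ico (0:ℝ) 1 ×ˢ Ioo (0:ℝ) 1 := by
        rw [hS, prod_inter_prod, univ_inter, inter_univ]
      rw [hSe, setIntegral_const, smul_eq_mul, mul_one, measureReal_def,
        Measure.volume_eq_prod, Measure.prod_prod, Real.volume_Ico, Real.volume_Ioo]
      norm_num
    rw [hzero, hone, zero_add]
  have key : ∀ g : ℝ × ℝ × ℝ → ℝ, Integrable g (ν1.prod ν2) →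
      (∀ t ∈ Icc (0:ℝ) (1/c), Integrable (fun x : ℝ × ℝ => g (t, x)) ν2 →
        ∫ x, g (t, x) ∂ν2 = 0) → ∫ p, g p ∂(ν1.prod ν2) = 0 := by
    intro g hg hz
    rw [integral_prod _ hg]
    refine integral_eq_zero_of_ae ?_
    have hae1 := hg.prod_right_ae
    have hae2 : ∀ᵐ t ∂ν1, t ∈ Icc (0:ℝ) (1/c) := by
      rw [hν1]; exact ae_restrict_mem measurableSet_Icc
    filter_upwards [hae1, hae2] with t h1' h2'
    exact hz t h2' h1'
  have hcurve : ∀ t : ℝ, Continuous fun p : ℝ × ℝ => ((t, p.1, p.2) : ℝ × ℝ × ℝ) := fun t =>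
    continuous_const.prodMk (continuous_fst.prodMk continuous_snd)
  have hL : ∫ p, plap T p.1 p.2.1 p.2.2 ∂(ν1.prod ν2) = 0 := by
    refine key _ hInt4 ?_
    intro t ht hslice
    have hs : Integrable (fun x : ℝ × ℝ => plap T t x.1 x.2) ν2 := hslice
    show ∫ x : ℝ × ℝ, plap T t x.1 x.2 ∂ν2 = 0
    rw [hν2] at hs ⊢
    rw [integral_prod _ hs]
    have hmarg : Integrable (fun x₁ : ℝ => ∫ y in Ioo (0:ℝ) 1, plap T t x₁ y) volume :=
      hs.integral_prod_left
    have hFc : Continuous fun p : ℝ × ℝ => pd1 T t p.1 p.2 := by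
      rw [show (fun p : ℝ × ℝ => pd1 T t p.1 p.2) = fun p : ℝ × ℝ => D1T T (t, p.1, p.2) from
        funext fun p => pd1_eq hTT t p.1 p.2]
      exact (cont_D1T hTT).comp (hcurve t)
    have hF'c : Continuous fun p : ℝ × ℝ => D11T T (t, p.1, p.2) :=
      (cont_D11T hTT).comp (hcurve t)
    have hder : ∀ x₁ : ℝ, HasDerivAt (fun a => ∫ y in Ioo (0:ℝ) 1, pd1 T t a y)
        (∫ y in Ioo (0:ℝ) 1, plap T t x₁ y) x₁ := by
      intro x₁
      have h1 : HasDerivAt (fun a => ∫ y in Ioo (0:ℝ) 1, pd1 T t a y)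
          (∫ y in Ioo (0:ℝ) 1, D11T T (t, x₁, y)) x₁ :=
        hasDerivAt_int (fun a y => pd1 T t a y) (fun a y => D11T T (t, a, y)) hFc hF'c
          (fun a y => hasDerivAt_pd1 hTT t a y) x₁
      have hI11 : IntegrableOn (fun y => D11T T (t, x₁, y)) (Ioo (0:ℝ) 1) volume :=
        integrableOn_Ioo_of_continuous ((cont_D11T hTT).comp
          (continuous_const.prodMk (continuous_const.prodMk continuous_id)))
      have hI22 : IntegrableOn (fun y => D22T T (t, x₁, y)) (Ioo (0:ℝ) 1) volume :=
        integrableOn_Ioo_of_continuous ((cont_D22T hTT).comp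
          (continuous_const.prodMk (continuous_const.prodMk continuous_id)))
      have h2' : (∫ y in Ioo (0:ℝ) 1, plap T t x₁ y) =
          ∫ y in Ioo (0:ℝ) 1, D11T T (t, x₁, y) := by
        rw [show (fun y => plap T t x₁ y) = fun y => D11T T (t, x₁, y) + D22T T (t, x₁, y) from
          funext (plap_eq hTT t x₁)]
        rw [integral_add hI11 hI22]
        have hz2 : ∫ y in Ioo (0:ℝ) 1, D22T T (t, x₁, y) = pd2 T t x₁ 1 - pd2 T t x₁ 0 :=
          integral_Ioo_deriv (fun b => pd2 T t x₁ b) (fun y => D22T T (t, x₁, y))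
            (fun y => hasDerivAt_pd2 hTT t x₁ y)
            ((cont_D22T hTT).comp
              (continuous_const.prodMk (continuous_const.prodMk continuous_id)))
        rw [hz2, pd2_period (T := T) hTper2 t x₁]
        ring
      rw [h2']
      exact h1
    have hfin := MeasureTheory.integral_of_hasDerivAt_of_tendsto hder hmarg
      (hbdry t ht).2 (hbdry t ht).1
    exact hfin.trans (by norm_num)
  obtain ⟨Cu, hCu0, hCu⟩ := u_bound hu.continuous huper1 huper2
  have hcu1 : Continuous fun p : ℝ × ℝ => (u (p.1, p.2)).1 :=
    (contDiff_u1 hu).continuous.comp (continuous_fst.prodMk continuous_snd)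
  have hcu2 : Continuous fun p : ℝ × ℝ => (u (p.1, p.2)).2 :=
    (contDiff_u2 hu).continuous.comp (continuous_fst.prodMk continuous_snd)
  have hcV1 : Continuous fun p : ℝ × ℝ => V1u u (p.1, p.2) :=
    (cont_V1u hu).comp (continuous_fst.prodMk continuous_snd)
  have hcV2 : Continuous fun p : ℝ × ℝ => V2u u (p.1, p.2) :=
    (cont_V2u hu).comp (continuous_fst.prodMk continuous_snd)
  -- the horizontal flux is zero through every vertical line
  have hΘ0 : ∀ a : ℝ, (∫ y in Ioo (0:ℝ) 1, (u (a, y)).1) = 0 := by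
    have hdθ : ∀ a : ℝ, HasDerivAt (fun a => ∫ y in Ioo (0:ℝ) 1, (u (a, y)).1)
        (∫ y in Ioo (0:ℝ) 1, V1u u (a, y)) a := fun a =>
      hasDerivAt_int (fun a y => (u (a, y)).1) (fun x y => V1u u (x, y)) hcu1 hcV1
        (fun x y => hasDerivAt_u1 hu x y) a
    have hval : ∀ a : ℝ, (∫ y in Ioo (0:ℝ) 1, V1u u (a, y)) = 0 := by
      intro a
      rw [show (fun y => V1u u (a, y)) = fun y => -(V2u u (a, y)) from funext fun y => by
        have h0 := div_eq hu hdiv a y; linarith]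
      rw [integral_neg]
      have hi : ∫ y in Ioo (0:ℝ) 1, V2u u (a, y) = (u (a, 1)).2 - (u (a, 0)).2 :=
        integral_Ioo_deriv (fun b => (u (a, b)).2) (fun y => V2u u (a, y))
          (fun y => hasDerivAt_u2 hu a y)
          (hcV2.comp (continuous_const.prodMk continuous_id))
      rw [hi]
      have hp := huper2 a 0
      rw [zero_add] at hp
      rw [hp]
      ring
    have hdiffθ : Differentiable ℝ (fun a => ∫ y in Ioo (0:ℝ) 1, (u (a, y)).1) := fun a =>
      (hdθ a).differentiableAt
    intro a
    have hca := is_const_of_deriv_eq_zero hdiffθ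
      (fun x => by rw [(hdθ x).deriv, hval x]) a 0
    rw [hca]
    exact hflux
  have hW : ∫ p, ((u (p.2.1, p.2.2)).1 * pd1 T p.1 p.2.1 p.2.2 +
      (u (p.2.1, p.2.2)).2 * pd2 T p.1 p.2.1 p.2.2) ∂(ν1.prod ν2) = 0 := by
    refine key _ hInt3 ?_
    intro t ht hslice
    have hs : Integrable (fun x : ℝ × ℝ => (u (x.1, x.2)).1 * pd1 T t x.1 x.2 +
        (u (x.1, x.2)).2 * pd2 T t x.1 x.2) ν2 := hslice
    show ∫ x : ℝ × ℝ, ((u (x.1, x.2)).1 * pd1 T t x.1 x.2 +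
        (u (x.1, x.2)).2 * pd2 T t x.1 x.2) ∂ν2 = 0
    rw [hν2] at hs ⊢
    rw [integral_prod _ hs]
    have hmarg : Integrable (fun x₁ : ℝ => ∫ y in Ioo (0:ℝ) 1,
        ((u (x₁, y)).1 * pd1 T t x₁ y + (u (x₁, y)).2 * pd2 T t x₁ y)) volume :=
      hs.integral_prod_left
    have hcT : Continuous fun p : ℝ × ℝ => T t p.1 p.2 := (cont_PhiT hTT).comp (hcurve t)
    have hcpd1 : Continuous fun p : ℝ × ℝ => pd1 T t p.1 p.2 := by
      rw [show (fun p : ℝ × ℝ => pd1 T t p.1 p.2) = fun p : ℝ × ℝ => D1T T (t, p.1, p.2) from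
        funext fun p => pd1_eq hTT t p.1 p.2]
      exact (cont_D1T hTT).comp (hcurve t)
    have hcpd2 : Continuous fun p : ℝ × ℝ => pd2 T t p.1 p.2 := by
      rw [show (fun p : ℝ × ℝ => pd2 T t p.1 p.2) = fun p : ℝ × ℝ => D2T T (t, p.1, p.2) from
        funext fun p => pd2_eq hTT t p.1 p.2]
      exact (cont_D2T hTT).comp (hcurve t)
    -- derivative of ψ
    have hdψ : ∀ x₁ : ℝ, HasDerivAt (fun a => ∫ y in Ioo (0:ℝ) 1, T t a y * (u (a, y)).1)
        (∫ y in Ioo (0:ℝ) 1,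
          (pd1 T t x₁ y * (u (x₁, y)).1 + T t x₁ y * V1u u (x₁, y))) x₁ := by
      intro x₁
      refine hasDerivAt_int (fun a y => T t a y * (u (a, y)).1)
        (fun x y => pd1 T t x y * (u (x, y)).1 + T t x y * V1u u (x, y))
        (hcT.mul hcu1) ((hcpd1.mul hcu1).add (hcT.mul hcV1)) (fun x y => ?_) x₁
      have hd1 : HasDerivAt (fun a => T t a y) (pd1 T t x y) x := by
        rw [pd1_eq hTT]; exact hasDerivAt_T2 hTT t x y
      exact hd1.mul (hasDerivAt_u1 hu x y)
    -- the marginal equals the derivative of ψ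
    have hmargeq : ∀ x₁ : ℝ, (∫ y in Ioo (0:ℝ) 1,
        ((u (x₁, y)).1 * pd1 T t x₁ y + (u (x₁, y)).2 * pd2 T t x₁ y)) =
        ∫ y in Ioo (0:ℝ) 1,
          (pd1 T t x₁ y * (u (x₁, y)).1 + T t x₁ y * V1u u (x₁, y)) := by
      intro x₁
      have hIF' : IntegrableOn (fun y =>
          pd1 T t x₁ y * (u (x₁, y)).1 + T t x₁ y * V1u u (x₁, y)) (Ioo (0:ℝ) 1) volume :=
        integrableOn_Ioo_of_continuous (((hcpd1.mul hcu1).add (hcT.mul hcV1)).comp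
          (continuous_const.prodMk continuous_id))
      have hIqd : IntegrableOn (fun y =>
          pd2 T t x₁ y * (u (x₁, y)).2 + T t x₁ y * V2u u (x₁, y)) (Ioo (0:ℝ) 1) volume :=
        integrableOn_Ioo_of_continuous (((hcpd2.mul hcu2).add (hcT.mul hcV2)).comp
          (continuous_const.prodMk continuous_id))
      rw [show (fun y => (u (x₁, y)).1 * pd1 T t x₁ y + (u (x₁, y)).2 * pd2 T t x₁ y) =
          fun y => (pd1 T t x₁ y * (u (x₁, y)).1 + T t x₁ y * V1u u (x₁, y)) +
            (pd2 T t x₁ y * (u (x₁, y)).2 + T t x₁ y * V2u u (x₁, y)) from funext fun y => by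
        have h0 := div_eq hu hdiv x₁ y
        linear_combination (-(T t x₁ y)) * h0]
      rw [integral_add hIF' hIqd]
      have hq : ∫ y in Ioo (0:ℝ) 1,
          (pd2 T t x₁ y * (u (x₁, y)).2 + T t x₁ y * V2u u (x₁, y)) =
          T t x₁ 1 * (u (x₁, 1)).2 - T t x₁ 0 * (u (x₁, 0)).2 := by
        refine integral_Ioo_deriv (fun b => T t x₁ b * (u (x₁, b)).2)
          (fun y => pd2 T t x₁ y * (u (x₁, y)).2 + T t x₁ y * V2u u (x₁, y)) (fun y => ?_)
          (((hcpd2.mul hcu2).add (hcT.mul hcV2)).comp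
            (continuous_const.prodMk continuous_id))
        have hd2 : HasDerivAt (fun b => T t x₁ b) (pd2 T t x₁ y) y := by
          rw [pd2_eq hTT]; exact hasDerivAt_T3 hTT t x₁ y
        exact hd2.mul (hasDerivAt_u2 hu x₁ y)
      rw [hq]
      have hpT := hTper2 t x₁ 0
      rw [zero_add] at hpT
      have hpu := huper2 x₁ 0
      rw [zero_add] at hpu
      rw [hpT, hpu]
      ring
    have hder : ∀ x₁ : ℝ, HasDerivAt (fun a => ∫ y in Ioo (0:ℝ) 1, T t a y * (u (a, y)).1)
        (∫ y in Ioo (0:ℝ) 1,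
          ((u (x₁, y)).1 * pd1 T t x₁ y + (u (x₁, y)).2 * pd2 T t x₁ y)) x₁ := by
      intro x₁
      rw [hmargeq x₁]
      exact hdψ x₁
    -- limits of ψ at ±∞
    have hvol : (volume (Ioo (0:ℝ) 1)).toReal = 1 := by simp [Real.volume_Ioo]
    have hεuse : ∀ ε : ℝ, 0 < ε → ε / (Cu + 1) * Cu < ε := by
      intro ε hε
      rw [div_mul_eq_mul_div, div_lt_iff₀ (by linarith)]
      nlinarith
    have htop : Tendsto (fun a => ∫ y in Ioo (0:ℝ) 1, T t a y * (u (a, y)).1)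
        atTop (nhds 0) := by
      rw [NormedAddCommGroup.tendsto_nhds_zero]
      intro ε hε
      obtain ⟨M, hM⟩ := hlim0 (ε / (Cu + 1)) (by positivity)
      filter_upwards [eventually_ge_atTop M] with x₁ hx₁
      have hb : ‖∫ y in Ioo (0:ℝ) 1, T t x₁ y * (u (x₁, y)).1‖ ≤
          (ε / (Cu + 1) * Cu) * (volume (Ioo (0:ℝ) 1)).toReal := by
        refine norm_setIntegral_le_of_norm_le_const (by simp [Real.volume_Ioo])
          (fun y hy => ?_)
        rw [Real.norm_eq_abs, abs_mul]
        exact mul_le_mul (le_of_lt (hM x₁ hx₁ y ⟨hy.1.le, hy.2.le⟩ t ht))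
          (hCu _) (abs_nonneg _) (by positivity)
      rw [hvol, mul_one] at hb
      exact lt_of_le_of_lt hb (hεuse ε hε)
    have hbot : Tendsto (fun a => ∫ y in Ioo (0:ℝ) 1, T t a y * (u (a, y)).1)
        atBot (nhds 0) := by
      have hψeq : ∀ x₁ : ℝ, (∫ y in Ioo (0:ℝ) 1, T t x₁ y * (u (x₁, y)).1) =
          ∫ y in Ioo (0:ℝ) 1, (T t x₁ y - 1) * (u (x₁, y)).1 := by
        intro x₁
        have hI1 : IntegrableOn (fun y => (T t x₁ y - 1) * (u (x₁, y)).1)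
            (Ioo (0:ℝ) 1) volume :=
          integrableOn_Ioo_of_continuous (((hcT.sub continuous_const).mul hcu1).comp
            (continuous_const.prodMk continuous_id))
        have hI2 : IntegrableOn (fun y => (u (x₁, y)).1) (Ioo (0:ℝ) 1) volume :=
          integrableOn_Ioo_of_continuous (hcu1.comp (continuous_const.prodMk continuous_id))
        rw [show (fun y => T t x₁ y * (u (x₁, y)).1) =
          fun y => (T t x₁ y - 1) * (u (x₁, y)).1 + (u (x₁, y)).1 from funext fun y => by ring]
        rw [integral_add hI1 hI2, hΘ0 x₁, add_zero]
      rw [NormedAddCommGroup.tendsto_nhds_zero]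
      intro ε hε
      obtain ⟨M, hM⟩ := hlim1 (ε / (Cu + 1)) (by positivity)
      filter_upwards [eventually_le_atBot (-M)] with x₁ hx₁
      rw [hψeq x₁]
      have hb : ‖∫ y in Ioo (0:ℝ) 1, (T t x₁ y - 1) * (u (x₁, y)).1‖ ≤
          (ε / (Cu + 1) * Cu) * (volume (Ioo (0:ℝ) 1)).toReal := by
        refine norm_setIntegral_le_of_norm_le_const (by simp [Real.volume_Ioo])
          (fun y hy => ?_)
        rw [Real.norm_eq_abs, abs_mul]
        exact mul_le_mul (le_of_lt (hM x₁ hx₁ y ⟨hy.1.le, hy.2.le⟩ t ht))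
          (hCu _) (abs_nonneg _) (by positivity)
      rw [hvol, mul_one] at hb
      exact lt_of_le_of_lt hb (hεuse ε hε)
    have hfin := MeasureTheory.integral_of_hasDerivAt_of_tendsto hder hmarg hbot htop
    exact hfin.trans (by norm_num)
  -- assemble
  have hfeq : (fun p : ℝ × ℝ × ℝ => f (T p.1 p.2.1 p.2.2)) = fun p =>
      (pdt T p.1 p.2.1 p.2.2 + A * ((u (p.2.1, p.2.2)).1 * pd1 T p.1 p.2.1 p.2.2 +
        (u (p.2.1, p.2.2)).2 * pd2 T p.1 p.2.1 p.2.2)) - plap T p.1 p.2.1 p.2.2 := by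
    funext p
    have := hpde p.1 p.2.1 p.2.2
    linarith
  calc ∫ p in Icc (0 : ℝ) (1 / c) ×ˢ (univ : Set ℝ) ×ˢ Ioo (0 : ℝ) 1,
        f (T p.1 p.2.1 p.2.2)
      = ∫ p, f (T p.1 p.2.1 p.2.2) ∂(ν1.prod ν2) := by rw [← h3]
    _ = ∫ p, ((pdt T p.1 p.2.1 p.2.2 + A * ((u (p.2.1, p.2.2)).1 * pd1 T p.1 p.2.1 p.2.2 +
        (u (p.2.1, p.2.2)).2 * pd2 T p.1 p.2.1 p.2.2)) - plap T p.1 p.2.1 p.2.2) ∂(ν1.prod ν2) := by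
        rw [hfeq]
    _ = (∫ p, (pdt T p.1 p.2.1 p.2.2 + A * ((u (p.2.1, p.2.2)).1 * pd1 T p.1 p.2.1 p.2.2 +
        (u (p.2.1, p.2.2)).2 * pd2 T p.1 p.2.1 p.2.2)) ∂(ν1.prod ν2)) -
        ∫ p, plap T p.1 p.2.1 p.2.2 ∂(ν1.prod ν2) := by
        exact integral_sub (hInt1.add (hInt3.const_mul A)) hInt4
    _ = ((∫ p, pdt T p.1 p.2.1 p.2.2 ∂(ν1.prod ν2)) +
        A * ∫ p, ((u (p.2.1, p.2.2)).1 * pd1 T p.1 p.2.1 p.2.2 +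
          (u (p.2.1, p.2.2)).2 * pd2 T p.1 p.2.1 p.2.2) ∂(ν1.prod ν2)) -
        ∫ p, plap T p.1 p.2.1 p.2.2 ∂(ν1.prod ν2) := by
        rw [integral_add hInt1 (hInt3.const_mul A), integral_const_mul]
    _ = 1 := by rw [hP, hW, hL]; ring
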